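/- Martin's Axiom for σ-centered partial orders together with 2^ℵ₀ > ℵ₁ implies that every set of reals of size ℵ₁ is a Q-set. -/

import Mathlib

open Cardinal

/-- `A ⊆ ℝ` is a Q-set: every subset of `A` is a relative `Gδ` subset of `A`. -/
def IsQSet (A : Set ℝ) : Prop :=
  ∀ B ⊆ A, ∃ S : Set ℝ, IsGδ S ∧ B = S ∩ A

/-- A preorder `P` is σ-centered: it can be split into countably many centered pieces,
where a piece is centered if any finitely many of its elements have a common lower bound. -/
def SigmaCentered (P : Type) [Preorder P] : Prop :=
  ∃ c : P → ℕ, ∀ s : Finset P, s.Nonempty → (∀ p ∈ s, ∀ q ∈ s, c p = c q) →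
    ∃ r : P, ∀ p ∈ s, r ≤ p

/-- `d` is dense in the preorder `P`. -/
def DenseSubset (P : Type) [Preorder P] (d : Set P) : Prop :=
  ∀ p : P, ∃ q ∈ d, q ≤ p

/-- `G` is a filter on the preorder `P`: upward closed and downward directed. -/
def IsPFilter (P : Type) [Preorder P] (G : Set P) : Prop :=
  G.Nonempty ∧ (∀ p ∈ G, ∀ q, p ≤ q → q ∈ G) ∧
    ∀ p ∈ G, ∀ q ∈ G, ∃ r ∈ G, r ≤ p ∧ r ≤ q

/-- Martin's Axiom for σ-centered partial orders: for every σ-centered preorder and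
every family of fewer than `2^ℵ₀` dense subsets there is a filter meeting all of them. -/
def MASigmaCentered : Prop :=
  ∀ (P : Type) (_ : Preorder P), SigmaCentered P →
    ∀ D : Set (Set P), #D < Cardinal.continuum → (∀ d ∈ D, DenseSubset P d) →
      ∃ G : Set P, IsPFilter P G ∧ ∀ d ∈ D, (G ∩ d).Nonempty

namespace QSetAux

open Classical in
/-- The open interval of reals coded by `e = (n, a, b)`, namely `(a, b)`. -/
def intOf (e : ℕ × ℚ × ℚ) : Set ℝ := Set.Ioo (e.2.1 : ℝ) (e.2.2 : ℝ)

lemma isOpen_intOf (e : ℕ × ℚ × ℚ) : IsOpen (intOf e) := isOpen_Ioo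

/-- The Silver–Booth forcing poset for making `ℝ \ C`-parts of `A` a relative `Gδ`:
conditions are pairs `(s, F)` with `s` a finite set of codes of rational intervals
tagged by natural numbers and `F` a finite subset of `C` (the points to be avoided). -/
def QP (C : Set ℝ) : Type :=
  {p : Finset (ℕ × ℚ × ℚ) × Finset ℝ // ∀ x ∈ p.2, x ∈ C}

instance (C : Set ℝ) : Preorder (QP C) where
  le q p := p.val.1 ⊆ q.val.1 ∧ p.val.2 ⊆ q.val.2 ∧
    ∀ e ∈ q.val.1, e ∉ p.val.1 → ∀ x ∈ p.val.2, x ∉ intOf e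
  le_refl p := ⟨subset_rfl, subset_rfl, fun e he hne => (hne he).elim⟩
  le_trans a b c hab hbc := by
    refine ⟨hbc.1.trans hab.1, hbc.2.1.trans hab.2.1, ?_⟩
    intro e hea henc x hxc
    by_cases heb : e ∈ b.val.1
    · exact hbc.2.2 e heb henc x hxc
    · exact hab.2.2 e hea heb x (hbc.2.1 hxc)

lemma qp_sigmaCentered (C : Set ℝ) : SigmaCentered (QP C) := by
  classical
  refine ⟨fun p => Encodable.encode p.val.1, ?_⟩
  intro s hs hc
  obtain ⟨p₀, hp₀⟩ := hs
  refine ⟨⟨⟨p₀.val.1, s.biUnion fun p => p.val.2⟩, ?_⟩, ?_⟩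
  · intro x hx
    simp only [Finset.mem_biUnion] at hx
    obtain ⟨p, _, hxp⟩ := hx
    exact p.property x hxp
  · intro p hp
    have h1 : p.val.1 = p₀.val.1 :=
      Encodable.encode_injective (hc p hp p₀ hp₀)
    refine ⟨by simp [h1], ?_, ?_⟩
    · intro x hx
      simp only [Finset.mem_biUnion]
      exact ⟨p, hp, hx⟩
    · intro e he hne
      rw [h1] at hne
      exact (hne he).elim

end QSetAux

open QSetAux in
/-- MA(σ-centered) together with `2^ℵ₀ > ℵ₁` implies every set of reals of size `ℵ₁`
is a Q-set. -/
theorem qset_of_MA_sigma_centered (hMA : MASigmaCentered)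
    (hnCH : aleph 1 < Cardinal.continuum) :
    ∀ A : Set ℝ, #A = aleph 1 → IsQSet A := by
  classical
  intro A hA B hBA
  have hnCH0 : (aleph 1 : Cardinal) < Cardinal.continuum :=
    Cardinal.lift_lt_continuum.{0, u_1}.mp
      (by rw [Cardinal.lift_aleph.{0, u_1}, Ordinal.lift_one]; exact hnCH)
  set C : Set ℝ := A \ B with hC
  -- the dense sets
  let D1 : ℕ → ℝ → Set (QP C) := fun n b =>
    {p | ∃ a b' : ℚ, (n, a, b') ∈ p.val.1 ∧ b ∈ intOf (n, a, b')}
  let D2 : ℝ → Set (QP C) := fun x => {p | x ∈ p.val.2}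
  let D : Set (Set (QP C)) := (⋃ n : ℕ, (fun b => D1 n b) '' B) ∪ (D2 '' C)
  -- D1 is dense
  have hD1dense : ∀ n : ℕ, ∀ b ∈ B, DenseSubset (QP C) (D1 n b) := by
    intro n b hb p
    -- find a rational interval around b avoiding the finite set p.val.2
    have hbF : b ∉ (p.val.2 : Set ℝ) := by
      intro hbF
      exact (p.property b hbF).2 hb
    have hop : IsOpen ((p.val.2 : Set ℝ)ᶜ) := (p.val.2.finite_toSet.isClosed).isOpen_compl
    obtain ⟨ε, hε, hball⟩ := Metric.isOpen_iff.1 hop b hbF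
    obtain ⟨a, ha1, ha2⟩ := exists_rat_btwn (show b - ε < b by linarith)
    obtain ⟨b', hb'1, hb'2⟩ := exists_rat_btwn (show b < b + ε by linarith)
    have hsub : Set.Ioo (a : ℝ) (b' : ℝ) ⊆ Metric.ball b ε := by
      intro x hx
      rw [Metric.mem_ball, Real.dist_eq, abs_lt]
      constructor <;> [nlinarith [hx.1]; nlinarith [hx.2]]
    refine ⟨⟨⟨insert (n, a, b') p.val.1, p.val.2⟩, p.property⟩, ⟨a, b', ?_, ?_⟩, ?_, subset_rfl, ?_⟩
    · simp
    · exact ⟨ha2, hb'1⟩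
    · exact Finset.subset_insert _ _
    · intro e he hne x hx
      rcases Finset.mem_insert.1 he with h | h
      · subst h
        intro hxe
        exact hball (hsub hxe) hx
      · exact (hne h).elim
  -- D2 is dense
  have hD2dense : ∀ x ∈ C, DenseSubset (QP C) (D2 x) := by
    intro x hx p
    refine ⟨⟨⟨p.val.1, insert x p.val.2⟩, ?_⟩, ?_, subset_rfl, Finset.subset_insert _ _, ?_⟩
    · intro y hy
      rcases Finset.mem_insert.1 hy with h | h
      · subst h; exact hx
      · exact p.property y h
    · exact Finset.mem_insert_self x _
    · intro e he hne
      exact (hne he).elim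
  have hDdense : ∀ d ∈ D, DenseSubset (QP C) d := by
    intro d hd
    rcases hd with hd | hd
    · simp only [Set.mem_iUnion, Set.mem_image] at hd
      obtain ⟨n, b, hb, rfl⟩ := hd
      exact hD1dense n b hb
    · obtain ⟨x, hx, rfl⟩ := hd
      exact hD2dense x hx
  -- cardinality of D
  have hDcard : #D < Cardinal.continuum := by
    have h1 : #(⋃ n : ℕ, (fun b => D1 n b) '' B) ≤ aleph 1 := by
      refine (mk_iUnion_le _).trans ?_
      have : ∀ n : ℕ, #((fun b => D1 n b) '' B) ≤ aleph 1 := fun n =>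
        mk_image_le.trans ((mk_le_mk_of_subset hBA).trans (le_of_eq hA))
      calc #ℕ * ⨆ n : ℕ, #((fun b => D1 n b) '' B)
          ≤ ℵ₀ * aleph 1 := by
            exact mul_le_mul' (le_of_eq mk_nat) (ciSup_le this)
        _ = aleph 1 := by
            rw [Cardinal.mul_eq_max (le_refl _) (aleph0_le_aleph 1)]
            exact max_eq_right (aleph0_le_aleph 1)
    have h2 : #(D2 '' C) ≤ aleph 1 := by
      refine mk_image_le.trans ?_
      refine (mk_le_mk_of_subset (Set.diff_subset)).trans (le_of_eq hA)
    calc #D ≤ #(⋃ n : ℕ, (fun b => D1 n b) '' B) + #(D2 '' C) := mk_union_le _ _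
      _ ≤ aleph 1 + aleph 1 := add_le_add h1 h2
      _ = aleph 1 := add_eq_self (aleph0_le_aleph 1)
      _ < Cardinal.continuum := hnCH0
  -- apply MA
  obtain ⟨G, hGfil, hGmeets⟩ := hMA (QP C) inferInstance (qp_sigmaCentered C) D hDcard hDdense
  -- build the Gδ set
  let U : ℕ → Set ℝ := fun n =>
    ⋃ e ∈ {e : ℕ × ℚ × ℚ | e.1 = n ∧ ∃ p ∈ G, e ∈ p.val.1}, intOf e
  refine ⟨⋂ n, U n, ?_, ?_⟩
  · refine IsGδ.iInter fun n => IsOpen.isGδ ?_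
    exact isOpen_biUnion fun e _ => isOpen_intOf e
  · apply Set.eq_of_subset_of_subset
    · intro b hb
      refine ⟨Set.mem_iInter.2 fun n => ?_, hBA hb⟩
      have : D1 n b ∈ D := Set.mem_union_left _ (Set.mem_iUnion.2 ⟨n, ⟨b, hb, rfl⟩⟩)
      obtain ⟨p, hpG, a, b', hmem, hbint⟩ := hGmeets _ this
      exact Set.mem_biUnion ⟨rfl, p, hpG, hmem⟩ hbint
    · rintro x ⟨hxS, hxA⟩
      by_contra hxB
      have hxC : x ∈ C := ⟨hxA, hxB⟩
      have : D2 x ∈ D := Set.mem_union_right _ ⟨x, hxC, rfl⟩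
      obtain ⟨p, hpG, hxp⟩ := hGmeets _ this
      -- choose n not tagged in p
      obtain ⟨n, hn⟩ : ∃ n : ℕ, ∀ e ∈ p.val.1, e.1 ≠ n := by
        obtain ⟨n, hn⟩ := (p.val.1.image Prod.fst).exists_notMem
        exact ⟨n, fun e he heq => hn (Finset.mem_image.2 ⟨e, he, heq⟩)⟩
      have hxU : x ∈ U n := Set.mem_iInter.1 hxS n
      simp only [U, Set.mem_iUnion] at hxU
      obtain ⟨e, ⟨hen, q, hqG, heq⟩, hxe⟩ := hxU
      obtain ⟨r, hrG, hrp, hrq⟩ := hGfil.2.2 p hpG q hqG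
      have her : e ∈ r.val.1 := hrq.1 heq
      have henp : e ∉ p.val.1 := fun h => hn e h hen
      exact hrp.2.2 e her henp x hxp hxe
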